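/- Let 0 < α < 1 and let u : ℝ → ℝ be a C² 2π-periodic function with amplitude V = max u − min u. Then there is a constant c₂ > 0 depending only on α such that for every B > 0 and every x ∈ ℝ: D_α u'(x) = ∫_ℝ |u'(x) − u'(x+z)|² |z|^{−(1+α)} dz ≥ B |u'(x)|² − c₂ B^{(2+α)/α} V². -/

import Mathlib

open Real MeasureTheory

/-- Commutator (alignment) forcing `T(ρ,u)(x) = ∫ ρ(x+z)(u(x+z)-u(x))|z|^{-(1+α)} dz`. -/
noncomputable def commT (α : ℝ) (ρ u : ℝ → ℝ) (x : ℝ) : ℝ :=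
  ∫ z : ℝ, ρ (x + z) * (u (x + z) - u x) / |z| ^ (1 + α)

/-- Fractional Laplacian `Λ^α f(x) = ∫ (f(x) - f(x+z))|z|^{-(1+α)} dz`. -/
noncomputable def fracLap (α : ℝ) (f : ℝ → ℝ) (x : ℝ) : ℝ :=
  ∫ z : ℝ, (f x - f (x + z)) / |z| ^ (1 + α)

/-- Dissipation functional `D_α g(x) = ∫ |g(x) - g(x+z)|² |z|^{-(1+α)} dz`. -/
noncomputable def dissip (α : ℝ) (g : ℝ → ℝ) (x : ℝ) : ℝ :=
  ∫ z : ℝ, (g x - g (x + z)) ^ 2 / |z| ^ (1 + α)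

/-- The fractional Euler alignment system holds at the point `(x,t)`:
`ρ_t + (ρu)_x = 0` and `u_t + u u_x = T(ρ,u)`. -/
def IsEulerAlignSol (α : ℝ) (ρ u : ℝ → ℝ → ℝ) (x t : ℝ) : Prop :=
  deriv (fun s => ρ x s) t + deriv (fun y => ρ y t * u y t) x = 0 ∧
  deriv (fun s => u x s) t + u x t * deriv (fun y => u y t) x
    = commT α (fun y => ρ y t) (fun y => u y t) x

/-- A continuous `2π`-periodic function is bounded. -/
private lemma aux_periodic_bdd {f : ℝ → ℝ} (hf : Continuous f)
    (hp : Function.Periodic f (2 * π)) : ∃ M : ℝ, 0 ≤ M ∧ ∀ y, |f y| ≤ M := by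
  have h2π : (0:ℝ) < 2 * π := by positivity
  have himg : f '' Set.Icc 0 (0 + 2 * π) = Set.range f := hp.image_Icc h2π 0
  have hcomp : IsCompact (f '' Set.Icc 0 (0 + 2 * π)) := (isCompact_Icc).image hf
  obtain ⟨M, hM⟩ := hcomp.isBounded.subset_closedBall 0
  refine ⟨max M 0, le_max_right _ _, fun y => ?_⟩
  have h1 : f y ∈ f '' Set.Icc 0 (0 + 2*π) := himg ▸ Set.mem_range_self y
  have h2 := hM h1
  simp only [Metric.mem_closedBall, Real.dist_eq, sub_zero] at h2
  exact h2.trans (le_max_left _ _)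

/-- Integrability of the dissipation integrand for a Lipschitz bounded function. -/
private lemma aux_integrable {α : ℝ} (hα₀ : 0 < α) (hα₁ : α < 1) {g : ℝ → ℝ}
    (hg : Continuous g) {x L M : ℝ} (hM0 : 0 ≤ M)
    (hlip : ∀ a b : ℝ, |g b - g a| ≤ L * |b - a|)
    (hM : ∀ y, |g y| ≤ M) :
    Integrable (fun z : ℝ => (g x - g (x + z)) ^ 2 / |z| ^ (1 + α)) := by
  set F := fun z : ℝ => (g x - g (x + z)) ^ 2 / |z| ^ (1 + α) with hF
  have hnumc : Continuous fun z : ℝ => (g x - g (x + z)) ^ 2 :=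
    (continuous_const.sub (hg.comp (continuous_const.add continuous_id))).pow 2
  have hmeas : Measurable F := by
    exact (hnumc.measurable).div
      ((continuous_abs.rpow_const (fun z => Or.inr (by positivity))).measurable)
  have hnum_far : ∀ z : ℝ, (g x - g (x + z)) ^ 2 ≤ 4 * M ^ 2 := by
    intro z
    have h1 : |g x - g (x + z)| ≤ 2 * M := by
      calc |g x - g (x + z)| ≤ |g x| + |g (x + z)| := abs_sub _ _
        _ ≤ M + M := add_le_add (hM _) (hM _)
        _ = 2 * M := by ring
    calc (g x - g (x + z)) ^ 2 = |g x - g (x + z)| ^ 2 := (sq_abs _).symm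
      _ ≤ (2 * M) ^ 2 := by nlinarith [abs_nonneg (g x - g (x+z))]
      _ = 4 * M ^ 2 := by ring
  have habs_pos : ∀ z : ℝ, z ≠ 0 → (0:ℝ) < |z| ^ (1 + α) := fun z hz =>
    Real.rpow_pos_of_pos (abs_pos.mpr hz) _
  have hF_nonneg : ∀ z, 0 ≤ F z := fun z => div_nonneg (sq_nonneg _) (by positivity)
  have hmid : IntegrableOn F (Set.Ioc (-1:ℝ) 1) := by
    refine Measure.integrableOn_of_bounded (M := L ^ 2) (by exact measure_Ioc_lt_top.ne)
      hmeas.aestronglyMeasurable ?_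
    filter_upwards [ae_restrict_mem measurableSet_Ioc] with z hz
    rcases eq_or_ne z 0 with rfl | hz0
    · simp [hF, Real.zero_rpow (by positivity : (1:ℝ) + α ≠ 0)]
      positivity
    · have ht0 : (0:ℝ) < |z| := abs_pos.mpr hz0
      have ht1 : |z| ≤ 1 := abs_le.mpr ⟨hz.1.le, hz.2⟩
      rw [Real.norm_eq_abs, abs_of_nonneg (hF_nonneg z)]
      have hnum : (g x - g (x + z)) ^ 2 ≤ L ^ 2 * |z| ^ (2:ℝ) := by
        have h1 : |g x - g (x + z)| ≤ L * |z| := by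
          have := hlip (x + z) x
          simpa [abs_sub_comm] using this
        calc (g x - g (x + z)) ^ 2 = |g x - g (x + z)| ^ 2 := (sq_abs _).symm
          _ ≤ (L * |z|) ^ 2 := by nlinarith [abs_nonneg (g x - g (x+z))]
          _ = L ^ 2 * |z| ^ (2:ℝ) := by
              rw [Real.rpow_two]; ring
      calc F z = (g x - g (x + z)) ^ 2 / |z| ^ (1 + α) := rfl
        _ ≤ L ^ 2 * |z| ^ (2:ℝ) / |z| ^ (1 + α) := by gcongr
        _ = L ^ 2 * |z| ^ (1 - α) := by
            rw [mul_div_assoc, ← Real.rpow_sub ht0,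
              show (2:ℝ) - (1 + α) = 1 - α by ring]
        _ ≤ L ^ 2 := by
            have : |z| ^ (1 - α) ≤ 1 :=
              Real.rpow_le_one (abs_nonneg _) ht1 (by linarith)
            nlinarith
  have hcmp : IntegrableOn (fun z : ℝ => 4 * M ^ 2 * z ^ (-(1 + α))) (Set.Ioi 1) :=
    (integrableOn_Ioi_rpow_of_lt (by linarith) one_pos).const_mul _
  have hright : IntegrableOn F (Set.Ioi (1:ℝ)) := by
    refine hcmp.mono' hmeas.aestronglyMeasurable.restrict ?_
    filter_upwards [ae_restrict_mem measurableSet_Ioi] with z hz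
    have hz1 : (1:ℝ) < z := hz
    have hz0 : (0:ℝ) < z := by linarith
    rw [Real.norm_eq_abs, abs_of_nonneg (hF_nonneg z)]
    have hzz : |z| = z := abs_of_pos hz0
    calc F z = (g x - g (x + z)) ^ 2 / z ^ (1 + α) := by rw [hF]; simp [hzz]
      _ ≤ 4 * M ^ 2 / z ^ (1 + α) := by
          gcongr
          exact hnum_far z
      _ = 4 * M ^ 2 * z ^ (-(1 + α)) := by
          rw [Real.rpow_neg hz0.le, div_eq_mul_inv]
  have hleft : IntegrableOn F (Set.Iic (-1:ℝ)) := by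
    rw [← (Measure.measurePreserving_neg (volume : Measure ℝ)).integrableOn_comp_preimage
      (Homeomorph.neg ℝ).measurableEmbedding]
    rw [show (Neg.neg ⁻¹' Set.Iic (-1:ℝ) : Set ℝ) = Set.Ici 1 by ext y; simp]
    rw [integrableOn_Ici_iff_integrableOn_Ioi]
    refine hcmp.mono' ((hmeas.comp measurable_neg).aestronglyMeasurable).restrict ?_
    filter_upwards [ae_restrict_mem measurableSet_Ioi] with z hz
    have hz1 : (1:ℝ) < z := hz
    have hz0 : (0:ℝ) < z := by linarith
    have hFz : (F ∘ Neg.neg) z = (g x - g (x + -z)) ^ 2 / z ^ (1 + α) := by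
      simp only [Function.comp_apply, hF]
      rw [abs_neg, abs_of_pos hz0]
    rw [Real.norm_eq_abs, hFz, abs_of_nonneg (by positivity)]
    have h1 : |g x - g (x + -z)| ≤ 2 * M := by
      calc |g x - g (x + -z)| ≤ |g x| + |g (x + -z)| := abs_sub _ _
        _ ≤ M + M := add_le_add (hM _) (hM _)
        _ = 2 * M := by ring
    have h2 : (g x - g (x + -z)) ^ 2 ≤ 4 * M ^ 2 := by
      calc (g x - g (x + -z)) ^ 2 = |g x - g (x + -z)| ^ 2 := (sq_abs _).symm
        _ ≤ (2 * M) ^ 2 := by nlinarith [abs_nonneg (g x - g (x + -z))]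
        _ = 4 * M ^ 2 := by ring
    calc (g x - g (x + -z)) ^ 2 / z ^ (1 + α) ≤ 4 * M ^ 2 / z ^ (1 + α) := by
          gcongr
      _ = 4 * M ^ 2 * z ^ (-(1 + α)) := by
          rw [Real.rpow_neg hz0.le, div_eq_mul_inv]
  have huniv : (Set.univ : Set ℝ) = Set.Iic (-1) ∪ (Set.Ioc (-1) 1 ∪ Set.Ioi 1) := by
    rw [Set.Ioc_union_Ioi_eq_Ioi (by norm_num : (-1:ℝ) ≤ 1), Set.Iic_union_Ioi]
  rw [← integrableOn_univ, huniv]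
  exact hleft.union (hmid.union hright)

/-- Lower bound of the dissipation by a localized average. -/
private lemma aux_lower {α : ℝ} (hα₀ : 0 < α) {u : ℝ → ℝ}
    (hudiff : Differentiable ℝ u) (hg : Continuous (deriv u))
    {x r V : ℝ} (hr : 0 < r)
    (hF_int : Integrable (fun z : ℝ => (deriv u x - deriv u (x + z)) ^ 2 / |z| ^ (1 + α)))
    (hVd : ∀ a b : ℝ, |u b - u a| ≤ V) :
    (r * (deriv u x) ^ 2 - 2 * (|deriv u x| * V)) / (2 * r) ^ (1 + α)
      ≤ dissip α (deriv u) x := by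
  set g := deriv u with hgdef
  set A := g x with hA
  set F := fun z : ℝ => (g x - g (x + z)) ^ 2 / |z| ^ (1 + α) with hF
  have hF_nonneg : ∀ z, 0 ≤ F z := fun z => div_nonneg (sq_nonneg _) (by positivity)
  have h2r : (0:ℝ) < 2 * r := by linarith
  have hden_pos : (0:ℝ) < (2 * r) ^ (1 + α) := Real.rpow_pos_of_pos h2r _
  have step1 : ∫ z in Set.Icc r (2*r), F z ≤ dissip α g x :=
    setIntegral_le_integral hF_int (Filter.Eventually.of_forall hF_nonneg)
  have hcont2 : Continuous fun z : ℝ => (A - g (x + z)) ^ 2 :=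
    (continuous_const.sub (hg.comp (continuous_const.add continuous_id))).pow 2
  have step2 : (∫ z in Set.Icc r (2*r), (A - g (x + z)) ^ 2) / (2*r) ^ (1 + α)
      ≤ ∫ z in Set.Icc r (2*r), F z := by
    rw [← integral_div]
    refine setIntegral_mono_on (hcont2.div_const _).integrableOn_Icc
      hF_int.integrableOn measurableSet_Icc ?_
    intro z hz
    have hz0 : 0 < z := lt_of_lt_of_le hr hz.1
    have hzabs : |z| = z := abs_of_pos hz0
    have hle : |z| ^ (1 + α) ≤ (2*r) ^ (1 + α) := by
      rw [hzabs]; exact Real.rpow_le_rpow hz0.le hz.2 (by linarith)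
    have hpos : (0:ℝ) < |z| ^ (1 + α) := by rw [hzabs]; positivity
    exact div_le_div_of_nonneg_left (sq_nonneg _) hpos hle
  have hgint : IntegrableOn (fun z => g (x + z)) (Set.Icc r (2*r)) :=
    (hg.comp (continuous_const.add continuous_id)).integrableOn_Icc
  have expand : ∫ z in Set.Icc r (2*r), (A^2 - 2*A*g (x + z))
      ≤ ∫ z in Set.Icc r (2*r), (A - g (x + z)) ^ 2 := by
    refine setIntegral_mono_on ((integrableOn_const measure_Icc_lt_top.ne).sub
      ((hgint.const_mul (2*A)))) hcont2.integrableOn_Icc measurableSet_Icc ?_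
    intro z _
    nlinarith [sq_nonneg (g (x + z))]
  have heval : ∫ z in Set.Icc r (2*r), (A^2 - 2*A*g (x + z))
      = A^2 * r - 2*A*(u (x + 2*r) - u (x + r)) := by
    rw [integral_sub (integrableOn_const (C := A^2) measure_Icc_lt_top.ne)
      (hgint.const_mul (2*A))]
    have h1 : ∫ _ in Set.Icc r (2*r), A^2 = A^2 * r := by
      rw [setIntegral_const, Real.volume_real_Icc_of_le (by linarith), smul_eq_mul]
      ring
    have h2 : ∫ z in Set.Icc r (2*r), g (x + z) = u (x + 2*r) - u (x + r) := by
      rw [integral_Icc_eq_integral_Ioc, ← intervalIntegral.integral_of_le (by linarith)]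
      rw [intervalIntegral.integral_comp_add_left (fun t => g t) x]
      exact intervalIntegral.integral_deriv_eq_sub (fun t _ => hudiff t)
        (hg.intervalIntegrable _ _)
    rw [h1, integral_const_mul, h2]
  have hVb : -(2 * (|A| * V)) ≤ -(2 * A * (u (x + 2*r) - u (x + r))) := by
    have habs : |u (x + 2*r) - u (x + r)| ≤ V := hVd _ _
    have h4 : A * (u (x + 2*r) - u (x + r)) ≤ |A| * V := by
      calc A * (u (x + 2*r) - u (x + r)) ≤ |A * (u (x + 2*r) - u (x + r))| := le_abs_self _
        _ = |A| * |u (x + 2*r) - u (x + r)| := abs_mul _ _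
        _ ≤ |A| * V := mul_le_mul_of_nonneg_left habs (abs_nonneg _)
    linarith
  have step3 : r * A^2 - 2 * (|A| * V) ≤ ∫ z in Set.Icc r (2*r), (A - g (x + z)) ^ 2 := by
    have := heval ▸ expand
    linarith
  calc (r * A^2 - 2 * (|A| * V)) / (2*r) ^ (1 + α)
      ≤ (∫ z in Set.Icc r (2*r), (A - g (x + z)) ^ 2) / (2*r) ^ (1 + α) := by gcongr
    _ ≤ ∫ z in Set.Icc r (2*r), F z := step2
    _ ≤ dissip α g x := step1

/-- The elementary `rpow` algebra behind the choice of localization radius. -/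
private lemma aux_algebra (α B : ℝ) (hα₀ : 0 < α) (hB : 0 < B) (A V : ℝ) :
    B * A^2 - ((2:ℝ) ^ ((2+α)*(1+α)/α - α))^2/4 * B^((2+α)/α) * V^2
      ≤ ((((2:ℝ)^(2+α) * B) ^ (-(1/α))) * A^2 - 2 * (|A| * V))
          / (2 * (((2:ℝ)^(2+α) * B) ^ (-(1/α)))) ^ (1+α) := by
  have hα : α ≠ 0 := ne_of_gt hα₀
  set X := (2:ℝ)^(2+α) * B with hX
  have hXpos : 0 < X := by positivity
  set r := X ^ (-(1/α)) with hrdef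
  have hr : 0 < r := rpow_pos_of_pos hXpos _
  set C := (2:ℝ) ^ ((2+α)*(1+α)/α - α) with hC
  have hCpos : 0 < C := rpow_pos_of_pos two_pos _
  have hden : (2 * r) ^ (1+α) = 2 ^ (1+α) * r ^ (1+α) :=
    mul_rpow (by norm_num) hr.le
  have hrpow : ∀ s : ℝ, r ^ s = X ^ (-(1/α) * s) := fun s => by
    rw [hrdef, ← Real.rpow_mul hXpos.le]
  have e3 : r ^ (1+α) = X ^ (-((1+α)/α)) := by
    rw [hrpow]; congr 1; ring
  have e2 : X ^ (-(1/α)) / X ^ (-((1+α)/α)) = X := by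
    rw [← Real.rpow_sub hXpos, show -(1/α) - -((1+α)/α) = 1 by field_simp; ring, rpow_one]
  have h21 : (2:ℝ)^(2+α) / 2^(1+α) = 2 := by
    rw [← Real.rpow_sub two_pos, show (2+α) - (1+α) = (1:ℝ) by ring, rpow_one]
  have I1 : r / (2*r)^(1+α) = 2*B := by
    rw [hden, e3, hrdef, mul_comm ((2:ℝ)^(1+α)), ← div_div, e2, hX, mul_div_right_comm, h21]
  have hXe : X ^ ((1+α)/α) = 2 ^ ((2+α)*(1+α)/α) * B ^ ((1+α)/α) := by
    rw [hX, mul_rpow (by positivity) hB.le, ← Real.rpow_mul (by norm_num : (0:ℝ) ≤ 2)]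
    congr 1
    ring
  have h22 : (2:ℝ) / 2^(1+α) = 2 ^ (-α) := by
    rw [show (-α : ℝ) = 1 - (1+α) by ring, Real.rpow_sub two_pos, rpow_one]
  have I2 : 2 / (2*r)^(1+α) = C * B^((1+α)/α) := by
    rw [hden, e3, Real.rpow_neg hXpos.le, ← div_div, h22, div_eq_mul_inv, inv_inv, hXe, hC,
      Real.rpow_sub two_pos, Real.rpow_neg (by norm_num : (0:ℝ) ≤ 2)]
    ring
  have hkey : (r * A^2 - 2 * (|A| * V)) / (2*r)^(1+α)
      = 2*B*A^2 - C * B^((1+α)/α) * (|A| * V) := by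
    rw [sub_div, mul_div_right_comm, mul_div_right_comm, I1, I2]
  rw [hkey]
  have hsq : Real.sqrt B * B ^ ((2+α)/(2*α)) = B ^ ((1+α)/α) := by
    rw [Real.sqrt_eq_rpow, ← Real.rpow_add hB]
    congr 1
    field_simp
    ring
  have hBe2 : B ^ ((2+α)/(2*α)) * B ^ ((2+α)/(2*α)) = B ^ ((2+α)/α) := by
    rw [← Real.rpow_add hB]
    congr 1
    field_simp
    ring
  have h2ab := two_mul_le_add_sq (Real.sqrt B * |A|) (C/2 * B^((2+α)/(2*α)) * V)
  have ha2 : (Real.sqrt B * |A|)^2 = B * A^2 := by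
    rw [mul_pow, sq_sqrt hB.le, sq_abs]
  have hb2 : (C/2 * B^((2+α)/(2*α)) * V)^2 = C^2/4 * B^((2+α)/α) * V^2 := by
    rw [mul_pow, mul_pow, div_pow,
      show (B ^ ((2+α)/(2*α)))^2 = B ^ ((2+α)/(2*α)) * B ^ ((2+α)/(2*α)) from sq _, hBe2]
    norm_num
  have hab : 2 * (Real.sqrt B * |A|) * (C/2 * B^((2+α)/(2*α)) * V)
      = C * B^((1+α)/α) * (|A| * V) := by
    rw [← hsq]; ring
  rw [ha2, hb2, hab] at h2ab
  linarith

/-- second form of the nonlinear maximum principle: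
`D_α u'(x) ≥ B |u'(x)|² - c₂ B^{(2+α)/α} V²`, with `c₂` depending only on `α`. -/
theorem nonlinear_max_principle_B
    (α : ℝ) (hα₀ : 0 < α) (hα₁ : α < 1) :
    ∃ c₂ : ℝ, 0 < c₂ ∧
      ∀ (u : ℝ → ℝ) (V : ℝ),
        ContDiff ℝ 2 u → Function.Periodic u (2 * π) →
        V = sSup (Set.range u) - sInf (Set.range u) →
        ∀ (B : ℝ), 0 < B → ∀ x : ℝ,
          B * (deriv u x) ^ 2 - c₂ * B ^ ((2 + α) / α) * V ^ 2 ≤ dissip α (deriv u) x := by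
  refine ⟨((2:ℝ) ^ ((2+α)*(1+α)/α - α))^2/4, by positivity, ?_⟩
  intro u V hu hper hV B hB x
  have hucont : Continuous u := hu.continuous
  rw [show (2 : WithTop ℕ∞) = 1 + 1 by norm_num, contDiff_succ_iff_deriv] at hu
  have hudiff : Differentiable ℝ u := hu.1
  have hg1 : ContDiff ℝ 1 (deriv u) := hu.2.2
  have hg : Continuous (deriv u) := hg1.continuous
  have hgdiff : Differentiable ℝ (deriv u) := hg1.differentiable one_ne_zero
  have hg' : Continuous (deriv (deriv u)) := hg1.continuous_deriv le_rfl
  have hgper : Function.Periodic (deriv u) (2*π) := by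
    intro y
    have hfun : (fun t => u (t + 2*π)) = u := funext hper
    have h := deriv_comp_add_const u (2*π) y
    rw [hfun] at h
    exact h.symm
  have hg'per : Function.Periodic (deriv (deriv u)) (2*π) := by
    intro y
    have hfun : (fun t => deriv u (t + 2*π)) = deriv u := funext hgper
    have h := deriv_comp_add_const (deriv u) (2*π) y
    rw [hfun] at h
    exact h.symm
  obtain ⟨M, hM0, hM⟩ := aux_periodic_bdd hg hgper
  obtain ⟨L, hL0, hL⟩ := aux_periodic_bdd hg' hg'per
  have hlip : ∀ a b : ℝ, |deriv u b - deriv u a| ≤ L * |b - a| := by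
    intro a b
    have := convex_univ.norm_image_sub_le_of_norm_deriv_le
      (f := deriv u) (fun y _ => hgdiff y)
      (fun y _ => (Real.norm_eq_abs _) ▸ hL y)
      (Set.mem_univ a) (Set.mem_univ b)
    simpa [Real.norm_eq_abs] using this
  have hF_int : Integrable (fun z : ℝ => (deriv u x - deriv u (x + z)) ^ 2 / |z| ^ (1 + α)) :=
    aux_integrable hα₀ hα₁ hg hM0 hlip hM
  -- amplitude bound
  have hVd : ∀ a b : ℝ, |u b - u a| ≤ V := by
    have h2π : (0:ℝ) < 2 * π := by positivity
    have hrange : Set.range u = u '' Set.Icc 0 (0 + 2*π) := (hper.image_Icc h2π 0).symm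
    have hcomp : IsCompact (u '' Set.Icc 0 (0 + 2*π)) := isCompact_Icc.image hucont
    have hba : BddAbove (Set.range u) := hrange ▸ hcomp.bddAbove
    have hbb : BddBelow (Set.range u) := hrange ▸ hcomp.bddBelow
    intro a b
    have h1 : u b ≤ sSup (Set.range u) := le_csSup hba ⟨b, rfl⟩
    have h2 : sInf (Set.range u) ≤ u a := csInf_le hbb ⟨a, rfl⟩
    have h3 : u a ≤ sSup (Set.range u) := le_csSup hba ⟨a, rfl⟩
    have h4 : sInf (Set.range u) ≤ u b := csInf_le hbb ⟨b, rfl⟩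
    rw [abs_sub_le_iff, hV]
    constructor <;> linarith
  have hr : (0:ℝ) < ((2:ℝ)^(2+α) * B) ^ (-(1/α)) :=
    rpow_pos_of_pos (by positivity) _
  calc B * (deriv u x) ^ 2 - ((2:ℝ) ^ ((2+α)*(1+α)/α - α))^2/4 * B ^ ((2 + α) / α) * V ^ 2
      ≤ ((((2:ℝ)^(2+α) * B) ^ (-(1/α))) * (deriv u x)^2 - 2 * (|deriv u x| * V))
          / (2 * (((2:ℝ)^(2+α) * B) ^ (-(1/α)))) ^ (1+α) :=
        aux_algebra α B hα₀ hB (deriv u x) V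
    _ ≤ dissip α (deriv u) x := aux_lower hα₀ hudiff hg hr hF_int hVd
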